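/- For n ≥ 3, the odd unitary Steinberg group StU(2n,R,𝔏) is generated by the two subgroups U₁^StU(2n,R,𝔏) = ⟨X_{n,i}(a), X_n(ζ) : i ∈ Ω∖{±n}, a ∈ R, ζ ∈ 𝔏⟩ and U₁⁻^StU(2n,R,𝔏) = ⟨X_{−n,i}(a), X_{−n}(ζ) : i ∈ Ω∖{±n}, a ∈ R, ζ ∈ 𝔏⟩. -/

import Mathlib

open MulOpposite
open scoped commutatorElement

universe u

/-- A pseudo-involution on a ring `R`: an additive map `a ↦ ā` such that `1̄` is
invertible (with explicit inverse `e = 1̄⁻¹`), `ā̄ = a` and `(ab)‾ = b̄·1̄⁻¹·ā`. -/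
structure PseudoInvolution (R : Type*) [Ring R] where
  bar : R → R
  bar_add : ∀ a b : R, bar (a + b) = bar a + bar b
  e : R
  e_bar_one : e * bar 1 = 1
  bar_one_e : bar 1 * e = 1
  bar_bar : ∀ a : R, bar (bar a) = a
  bar_mul : ∀ a b : R, bar (a * b) = bar b * e * bar a

/-- An anti-Hermitian form on a right `R`-module `V` (a right module is encoded as a
module over the opposite ring, so `u·a` is `op a • u`). -/
structure AntiHermitianForm (R : Type*) [Ring R] (pi : PseudoInvolution R)
    (V : Type*) [AddCommGroup V] [Module Rᵐᵒᵖ V] where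
  B : V → V → R
  add_left : ∀ u v w : V, B (u + v) w = B u w + B v w
  add_right : ∀ u v w : V, B u (v + w) = B u v + B u w
  smul_pair : ∀ (a b : R) (u v : V), B (op a • u) (op b • v) = pi.bar a * pi.e * B u v * b
  skew : ∀ u v : V, B u v = - pi.bar (B v u)

variable {R : Type u} [Ring R] {pi : PseudoInvolution R}
variable {V : Type u} [AddCommGroup V] [Module Rᵐᵒᵖ V]

/-- The Heisenberg group operation `(u,a) ∔ (v,b) = (u+v, a+b+B(u,v))`. -/
def hAdd (f : AntiHermitianForm R pi V) (x y : V × R) : V × R :=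
  (x.1 + y.1, x.2 + y.2 + f.B x.1 y.1)

/-- The Heisenberg group inverse `∸(u,a) = (−u, −a+B(u,u))`. -/
def hInv (f : AntiHermitianForm R pi V) (x : V × R) : V × R :=
  (-x.1, -x.2 + f.B x.1 x.1)

/-- The right action of `R` on the Heisenberg group, `(u,a) ↼ b = (ub, b̄·1̄⁻¹·a·b)`. -/
def hAct (pi : PseudoInvolution R) (x : V × R) (b : R) : V × R :=
  (op b • x.1, pi.bar b * pi.e * x.2 * b)

/-- An odd form parameter: a subgroup of the Heisenberg group, stable under the
`R`-action, lying between `𝔏_min` and `𝔏_max`. -/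
structure OddFormParameter (f : AntiHermitianForm R pi V) where
  carrier : Set (V × R)
  add_mem : ∀ x y : V × R, x ∈ carrier → y ∈ carrier → hAdd f x y ∈ carrier
  inv_mem : ∀ x : V × R, x ∈ carrier → hInv f x ∈ carrier
  act_mem : ∀ x : V × R, x ∈ carrier → ∀ b : R, hAct pi x b ∈ carrier
  min_le : ∀ a : R, ((0 : V), a + pi.bar a) ∈ carrier
  le_max : ∀ x : V × R, x ∈ carrier → x.2 = pi.bar x.2 + f.B x.1 x.1

/-- The index set `Ω = {1,…,n,−n,…,−1}` (for `n = ∞` all nonzero integers). -/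
def Omega (n : ℕ∞) : Set ℤ := {i : ℤ | i ≠ 0 ∧ (i.natAbs : ℕ∞) ≤ n}

/-- `ε_i = 1̄⁻¹` for `i > 0` and `ε_i = −1` for `i < 0`. -/
def epsI (pi : PseudoInvolution R) (i : ℤ) : R := if 0 < i then pi.e else -1

/-- A family of "Steinberg generators" in a group `G` satisfying Petrov's relations
R0–R9 of the odd unitary Steinberg group `StU(2n, R, 𝔏)`. -/
structure StURels (n : ℕ∞) (f : AntiHermitianForm R pi V) (L : OddFormParameter f)
    (G : Type*) [Group G] where
  X : ℤ → ℤ → R → G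
  Y : ℤ → V × R → G
  rel0 : ∀ i j : ℤ, i ∈ Omega n → j ∈ Omega n → j ≠ i → j ≠ -i → ∀ a : R,
    X i j a = X (-j) (-i) (epsI pi (-j) * pi.bar a * epsI pi i)
  rel1 : ∀ i j : ℤ, i ∈ Omega n → j ∈ Omega n → j ≠ i → j ≠ -i → ∀ a b : R,
    X i j a * X i j b = X i j (a + b)
  rel2 : ∀ i : ℤ, i ∈ Omega n → ∀ ξ ζ : V × R, ξ ∈ L.carrier → ζ ∈ L.carrier →
    Y i ξ * Y i ζ = Y i (hAdd f ξ ζ)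
  rel3 : ∀ i j h k : ℤ, i ∈ Omega n → j ∈ Omega n → h ∈ Omega n → k ∈ Omega n →
    j ≠ i → j ≠ -i → k ≠ h → k ≠ -h → h ≠ j → h ≠ -i → k ≠ i → k ≠ -j →
    ∀ a b : R, ⁅X i j a, X h k b⁆ = 1
  rel4 : ∀ i j k : ℤ, i ∈ Omega n → j ∈ Omega n → k ∈ Omega n → k ≠ j → k ≠ -j →
    j ≠ -i → k ≠ i → ∀ ξ : V × R, ξ ∈ L.carrier → ∀ a : R, ⁅Y i ξ, X j k a⁆ = 1
  rel5 : ∀ i j k : ℤ, i ∈ Omega n → j ∈ Omega n → k ∈ Omega n →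
    j ≠ i → j ≠ -i → k ≠ j → k ≠ -j → k ≠ i → k ≠ -i →
    ∀ a b : R, ⁅X i j a, X j k b⁆ = X i k (a * b)
  rel6 : ∀ i j : ℤ, i ∈ Omega n → j ∈ Omega n → j ≠ i → j ≠ -i →
    ∀ (u : V) (a : R) (v : V) (b : R), (u, a) ∈ L.carrier → (v, b) ∈ L.carrier →
    ⁅Y i (u, a), Y j (v, b)⁆ = X i (-j) (epsI pi i * f.B u v)
  rel7 : ∀ i : ℤ, i ∈ Omega n →
    ∀ (u : V) (a : R) (v : V) (b : R), (u, a) ∈ L.carrier → (v, b) ∈ L.carrier →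
    ⁅Y i (u, a), Y i (v, b)⁆ = Y i (0, f.B u v - f.B v u)
  rel8 : ∀ i j : ℤ, i ∈ Omega n → j ∈ Omega n → j ≠ i → j ≠ -i →
    ∀ (u : V) (a : R), (u, a) ∈ L.carrier → ∀ b : R,
    ⁅Y i (u, a), X (-i) j b⁆ = X i j (epsI pi i * a * b) * Y (-j) (hAct pi (u, -pi.bar a) b)
  rel9 : ∀ i j : ℤ, i ∈ Omega n → j ∈ Omega n → j ≠ i → j ≠ -i → ∀ a b : R,
    ⁅X i j a, X j (-i) b⁆ =
      Y i (0, -(epsI pi (-i)) * pi.bar 1 * a * b + pi.bar b * pi.e * pi.bar a * epsI pi i)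

/-- `(G, S)` *is* the odd unitary Steinberg group `StU(2n, R, 𝔏)`: it has the universal
property of the presentation, i.e. for every group `H` with Steinberg generators
satisfying R0–R9 there is a unique homomorphism `G →* H` matching the generators. -/
def IsStU {n : ℕ∞} {f : AntiHermitianForm R pi V} {L : OddFormParameter f}
    {G : Type u} [Group G] (S : StURels n f L G) : Prop :=
  ∀ (H : Type u) [Group H], ∀ T : StURels n f L H,
    ∃! φ : G →* H,
      (∀ i j : ℤ, i ∈ Omega n → j ∈ Omega n → j ≠ i → j ≠ -i → ∀ a : R,
        φ (S.X i j a) = T.X i j a) ∧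
      (∀ i : ℤ, i ∈ Omega n → ∀ ξ : V × R, ξ ∈ L.carrier → φ (S.Y i ξ) = T.Y i ξ)

section AuxProof

variable {R : Type u} [Ring R] {pi : PseudoInvolution R}
variable {V : Type u} [AddCommGroup V] [Module Rᵐᵒᵖ V]

lemma PseudoInvolution.bar_zero (pi : PseudoInvolution R) : pi.bar 0 = 0 := by
  have h := pi.bar_add 0 0
  rw [add_zero] at h
  exact left_eq_add.mp h

lemma PseudoInvolution.bar_neg (pi : PseudoInvolution R) (a : R) :
    pi.bar (-a) = -pi.bar a := by
  have h := pi.bar_add a (-a)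
  rw [add_neg_cancel, pi.bar_zero] at h
  exact eq_neg_of_add_eq_zero_right h.symm

lemma Omega.neg_mem {n : ℕ∞} {i : ℤ} (h : i ∈ Omega n) : -i ∈ Omega n := by
  obtain ⟨h1, h2⟩ := h
  exact ⟨by omega, by rwa [Int.natAbs_neg]⟩

lemma Omega.nat_mem {n : ℕ} (hn : 3 ≤ n) : ((n : ℤ)) ∈ Omega (n : ℕ∞) := by
  refine ⟨by omega, ?_⟩
  rw [Int.natAbs_natCast]

lemma OddFormParameter.mem_neg_bar {f : AntiHermitianForm R pi V}
    (L : OddFormParameter f) {u : V} {a : R} (h : (u, a) ∈ L.carrier) :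
    (u, -pi.bar a) ∈ L.carrier := by
  have h2 := L.act_mem _ (L.inv_mem _ h) (-1)
  have hmax : a = pi.bar a + f.B u u := L.le_max _ h
  have e1 : hAct pi (hInv f (u, a)) (-1) = (u, -pi.bar a) := by
    show ((op (-1 : R)) • (-u), pi.bar (-1) * pi.e * (-a + f.B u u) * (-1))
        = (u, -pi.bar a)
    rw [Prod.mk.injEq]
    constructor
    · rw [op_neg, op_one, neg_smul, one_smul, neg_neg]
    · rw [pi.bar_neg, neg_mul, neg_mul, mul_neg_one, neg_neg, pi.bar_one_e, one_mul]
      conv_lhs => rw [hmax]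
      abel
  rwa [e1] at h2

lemma OddFormParameter.mem_sub_form {f : AntiHermitianForm R pi V}
    (L : OddFormParameter f) (u v : V) :
    ((0 : V), f.B u v - f.B v u) ∈ L.carrier := by
  have e : f.B u v - f.B v u = -(f.B v u) + pi.bar (-(f.B v u)) := by
    rw [pi.bar_neg, f.skew u v]; abel
  rw [e]; exact L.min_le _

lemma OddFormParameter.mem_rel9 {f : AntiHermitianForm R pi V}
    (L : OddFormParameter f) {i : ℤ} (hi : i ≠ 0) (a b : R) :
    ((0 : V), -(epsI pi (-i)) * pi.bar 1 * a * b + pi.bar b * pi.e * pi.bar a * epsI pi i)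
      ∈ L.carrier := by
  by_cases hpos : 0 < i
  · have h1 : ¬ (0 : ℤ) < -i := by omega
    simp only [epsI, if_pos hpos, if_neg h1, neg_neg, one_mul]
    have hc : pi.bar (pi.bar 1 * a * b) = pi.bar b * pi.e * pi.bar a * pi.e := by
      rw [pi.bar_mul (pi.bar 1 * a) b, pi.bar_mul (pi.bar 1) a, pi.bar_bar, mul_one,
        ← mul_assoc]
    rw [← hc]
    exact L.min_le _
  · have h1 : (0 : ℤ) < -i := by omega
    simp only [epsI, if_pos h1, if_neg hpos]
    have e1 : -(pi.e) * pi.bar 1 * a * b = -(a * b) := by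
      rw [neg_mul, pi.e_bar_one, neg_one_mul, neg_mul]
    have e2 : pi.bar b * pi.e * pi.bar a * (-1) = pi.bar (-(a * b)) := by
      rw [mul_neg_one, ← pi.bar_mul a b, ← pi.bar_neg]
    rw [e1, e2]
    exact L.min_le _

lemma comm_mem {G : Type u} [Group G] {K : Subgroup G} {g h : G}
    (hg : g ∈ K) (hh : h ∈ K) : ⁅g, h⁆ ∈ K := by
  rw [commutatorElement_def]
  exact mul_mem (mul_mem (mul_mem hg hh) (inv_mem hg)) (inv_mem hh)

open Classical in
/-- Generators in the subgroup `K`. -/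
noncomputable def mkX {n : ℕ∞} {f : AntiHermitianForm R pi V} {L : OddFormParameter f}
    {G : Type u} [Group G] (S : StURels n f L G) (K : Subgroup G)
    (hX : ∀ i j : ℤ, i ∈ Omega n → j ∈ Omega n → j ≠ i → j ≠ -i → ∀ a : R,
      S.X i j a ∈ K) : ℤ → ℤ → R → K :=
  fun i j a =>
    if h : i ∈ Omega n ∧ j ∈ Omega n ∧ j ≠ i ∧ j ≠ -i then
      ⟨S.X i j a, hX i j h.1 h.2.1 h.2.2.1 h.2.2.2 a⟩
    else 1

lemma mkX_coe {n : ℕ∞} {f : AntiHermitianForm R pi V} {L : OddFormParameter f}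
    {G : Type u} [Group G] (S : StURels n f L G) (K : Subgroup G)
    (hX : ∀ i j : ℤ, i ∈ Omega n → j ∈ Omega n → j ≠ i → j ≠ -i → ∀ a : R,
      S.X i j a ∈ K)
    {i j : ℤ} (h1 : i ∈ Omega n) (h2 : j ∈ Omega n) (h3 : j ≠ i) (h4 : j ≠ -i)
    (a : R) : ((mkX S K hX i j a : K) : G) = S.X i j a := by
  rw [mkX, dif_pos ⟨h1, h2, h3, h4⟩]

open Classical in
noncomputable def mkY {n : ℕ∞} {f : AntiHermitianForm R pi V} {L : OddFormParameter f}
    {G : Type u} [Group G] (S : StURels n f L G) (K : Subgroup G)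
    (hY : ∀ i : ℤ, i ∈ Omega n → ∀ ξ : V × R, ξ ∈ L.carrier → S.Y i ξ ∈ K) :
    ℤ → V × R → K :=
  fun i ξ =>
    if h : i ∈ Omega n ∧ ξ ∈ L.carrier then ⟨S.Y i ξ, hY i h.1 ξ h.2⟩ else 1

lemma mkY_coe {n : ℕ∞} {f : AntiHermitianForm R pi V} {L : OddFormParameter f}
    {G : Type u} [Group G] (S : StURels n f L G) (K : Subgroup G)
    (hY : ∀ i : ℤ, i ∈ Omega n → ∀ ξ : V × R, ξ ∈ L.carrier → S.Y i ξ ∈ K)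
    {i : ℤ} (h1 : i ∈ Omega n) {ξ : V × R} (h2 : ξ ∈ L.carrier) :
    ((mkY S K hY i ξ : K) : G) = S.Y i ξ := by
  rw [mkY, dif_pos ⟨h1, h2⟩]

theorem stU_aux (f : AntiHermitianForm R pi V)
    (L : OddFormParameter f) (n : ℕ) (hn : 3 ≤ n)
    {G : Type u} [Group G] (S : StURels (n : ℕ∞) f L G) (hS : IsStU S)
    (K : Subgroup G)
    (hXn : ∀ i : ℤ, i ∈ Omega (n : ℕ∞) → i ≠ (n : ℤ) → i ≠ -(n : ℤ) → ∀ a : R,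
      S.X (n : ℤ) i a ∈ K)
    (hXmn : ∀ i : ℤ, i ∈ Omega (n : ℕ∞) → i ≠ (n : ℤ) → i ≠ -(n : ℤ) → ∀ a : R,
      S.X (-(n : ℤ)) i a ∈ K)
    (hYn : ∀ ξ : V × R, ξ ∈ L.carrier → S.Y (n : ℤ) ξ ∈ K)
    (hYmn : ∀ ξ : V × R, ξ ∈ L.carrier → S.Y (-(n : ℤ)) ξ ∈ K) :
    K = ⊤ := by
  have hN : ((n : ℤ)) ∈ Omega (n : ℕ∞) := Omega.nat_mem hn
  have hNneg : (-(n : ℤ)) ∈ Omega (n : ℕ∞) := Omega.neg_mem hN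
  have hn0 : (0 : ℤ) < (n : ℤ) := by omega
  -- every X generator is in K
  have hX : ∀ i j : ℤ, i ∈ Omega (n : ℕ∞) → j ∈ Omega (n : ℕ∞) → j ≠ i → j ≠ -i →
      ∀ a : R, S.X i j a ∈ K := by
    intro i j hi hj hji hjm a
    by_cases hiN : i = (n : ℤ)
    · subst hiN; exact hXn j hj hji hjm a
    by_cases hiM : i = -(n : ℤ)
    · subst hiM; exact hXmn j hj (by omega) (by omega) a
    by_cases hjN : j = (n : ℤ)
    · subst hjN
      rw [S.rel0 i (n : ℤ) hi hN hji hjm a]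
      exact hXmn (-i) (Omega.neg_mem hi) (by omega) (by omega) _
    by_cases hjM : j = -(n : ℤ)
    · subst hjM
      rw [S.rel0 i (-(n : ℤ)) hi hNneg hji hjm a]
      have : -(-(n : ℤ)) = (n : ℤ) := by omega
      rw [this]
      exact hXn (-i) (Omega.neg_mem hi) (by omega) (by omega) _
    · have h5 := S.rel5 i (n : ℤ) j hi hN hj (by omega) (by omega) hjN hjM hji hjm a 1
      rw [mul_one] at h5
      rw [← h5]
      have m1 : S.X i (n : ℤ) a ∈ K := by
        rw [S.rel0 i (n : ℤ) hi hN (by omega) (by omega) a]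
        exact hXmn (-i) (Omega.neg_mem hi) (by omega) (by omega) _
      exact comm_mem m1 (hXn j hj hjN hjM 1)
  -- every Y generator is in K
  have hY : ∀ i : ℤ, i ∈ Omega (n : ℕ∞) → ∀ ξ : V × R, ξ ∈ L.carrier →
      S.Y i ξ ∈ K := by
    intro i hi ξ hξ
    by_cases hiN : i = (n : ℤ)
    · subst hiN; exact hYn ξ hξ
    by_cases hiM : i = -(n : ℤ)
    · subst hiM; exact hYmn ξ hξ
    obtain ⟨u, a⟩ := ξ
    have hL' : (u, -pi.bar a) ∈ L.carrier := L.mem_neg_bar hξ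
    have h8 := S.rel8 (n : ℤ) (-i) hN (Omega.neg_mem hi) (by omega) (by omega)
      u (-pi.bar a) hL' 1
    have e2 : hAct pi (u, -pi.bar (-pi.bar a)) 1 = (u, a) := by
      rw [pi.bar_neg, neg_neg, pi.bar_bar]
      show ((op (1 : R)) • u, pi.bar 1 * pi.e * a * 1) = (u, a)
      rw [Prod.mk.injEq]
      constructor
      · rw [op_one, one_smul]
      · rw [mul_one, pi.bar_one_e, one_mul]
    rw [neg_neg, e2] at h8
    have h8' : S.Y i (u, a) =
        (S.X (n : ℤ) (-i) (epsI pi (n : ℤ) * (-pi.bar a) * 1))⁻¹ *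
          ⁅S.Y (n : ℤ) (u, -pi.bar a), S.X (-(n : ℤ)) (-i) 1⁆ :=
      eq_inv_mul_iff_mul_eq.mpr h8.symm
    rw [h8']
    exact mul_mem (inv_mem (hXn (-i) (Omega.neg_mem hi) (by omega) (by omega) _))
      (comm_mem (hYn _ hL') (hXmn (-i) (Omega.neg_mem hi) (by omega) (by omega) 1))
  -- build the Steinberg generators in K
  let T : StURels (n : ℕ∞) f L K :=
    { X := mkX S K hX
      Y := mkY S K hY
      rel0 := by
        intro i j hi hj h3 h4 a
        apply Subtype.ext
        rw [mkX_coe S K hX hi hj h3 h4, mkX_coe S K hX (Omega.neg_mem hj)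
          (Omega.neg_mem hi) (by omega) (by omega)]
        exact S.rel0 i j hi hj h3 h4 a
      rel1 := by
        intro i j hi hj h3 h4 a b
        apply Subtype.ext
        push_cast
        rw [mkX_coe S K hX hi hj h3 h4, mkX_coe S K hX hi hj h3 h4,
          mkX_coe S K hX hi hj h3 h4]
        exact S.rel1 i j hi hj h3 h4 a b
      rel2 := by
        intro i hi ξ ζ hξ hζ
        apply Subtype.ext
        push_cast
        rw [mkY_coe S K hY hi hξ, mkY_coe S K hY hi hζ,
          mkY_coe S K hY hi (L.add_mem ξ ζ hξ hζ)]
        exact S.rel2 i hi ξ ζ hξ hζ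
      rel3 := by
        intro i j h k hi hj hh hk h1 h2 h3 h4 h5 h6 h7 h8 a b
        apply Subtype.ext
        rw [commutatorElement_def]
        push_cast
        rw [mkX_coe S K hX hi hj h1 h2, mkX_coe S K hX hh hk h3 h4,
          ← commutatorElement_def]
        exact S.rel3 i j h k hi hj hh hk h1 h2 h3 h4 h5 h6 h7 h8 a b
      rel4 := by
        intro i j k hi hj hk h1 h2 h3 h4 ξ hξ a
        apply Subtype.ext
        rw [commutatorElement_def]
        push_cast
        rw [mkY_coe S K hY hi hξ, mkX_coe S K hX hj hk h1 h2,
          ← commutatorElement_def]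
        exact S.rel4 i j k hi hj hk h1 h2 h3 h4 ξ hξ a
      rel5 := by
        intro i j k hi hj hk h1 h2 h3 h4 h5 h6 a b
        apply Subtype.ext
        rw [commutatorElement_def]
        push_cast
        rw [mkX_coe S K hX hi hj h1 h2, mkX_coe S K hX hj hk h3 h4,
          mkX_coe S K hX hi hk h5 h6, ← commutatorElement_def]
        exact S.rel5 i j k hi hj hk h1 h2 h3 h4 h5 h6 a b
      rel6 := by
        intro i j hi hj h1 h2 u a v b hu hv
        apply Subtype.ext
        rw [commutatorElement_def]
        push_cast
        rw [mkY_coe S K hY hi hu, mkY_coe S K hY hj hv,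
          mkX_coe S K hX hi (Omega.neg_mem hj) (by omega) (by omega),
          ← commutatorElement_def]
        exact S.rel6 i j hi hj h1 h2 u a v b hu hv
      rel7 := by
        intro i hi u a v b hu hv
        apply Subtype.ext
        rw [commutatorElement_def]
        push_cast
        rw [mkY_coe S K hY hi hu, mkY_coe S K hY hi hv,
          mkY_coe S K hY hi (L.mem_sub_form u v), ← commutatorElement_def]
        exact S.rel7 i hi u a v b hu hv
      rel8 := by
        intro i j hi hj h1 h2 u a hu b
        apply Subtype.ext
        rw [commutatorElement_def]
        push_cast
        rw [mkY_coe S K hY hi hu,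
          mkX_coe S K hX (Omega.neg_mem hi) hj (by omega) (by omega),
          mkX_coe S K hX hi hj h1 h2,
          mkY_coe S K hY (Omega.neg_mem hj) (L.act_mem _ (L.mem_neg_bar hu) b),
          ← commutatorElement_def]
        exact S.rel8 i j hi hj h1 h2 u a hu b
      rel9 := by
        intro i j hi hj h1 h2 a b
        apply Subtype.ext
        rw [commutatorElement_def]
        push_cast
        rw [mkX_coe S K hX hi hj h1 h2,
          mkX_coe S K hX hj (Omega.neg_mem hi) (by omega) (by omega),
          mkY_coe S K hY hi (L.mem_rel9 hi.1 a b),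
          ← commutatorElement_def]
        exact S.rel9 i j hi hj h1 h2 a b }
  obtain ⟨φ, ⟨hφX, hφY⟩, -⟩ := hS (↥K) T
  obtain ⟨χ, -, hu⟩ := hS G S
  have hψ : K.subtype.comp φ = MonoidHom.id G := by
    have h1 := hu (K.subtype.comp φ) ?_
    · have h2 := hu (MonoidHom.id G) ⟨fun i j _ _ _ _ a => rfl, fun i _ ξ _ => rfl⟩
      rw [h1, h2]
    · constructor
      · intro i j hi hj h3 h4 a
        have := hφX i j hi hj h3 h4 a
        simp only [MonoidHom.comp_apply, this]
        exact mkX_coe S K hX hi hj h3 h4 a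
      · intro i hi ξ hξ
        have := hφY i hi ξ hξ
        simp only [MonoidHom.comp_apply, this]
        exact mkY_coe S K hY hi hξ
  rw [eq_top_iff]
  intro g _
  have : K.subtype.comp φ g = g := by rw [hψ]; rfl
  rw [← this]
  exact SetLike.coe_mem (φ g)

end AuxProof
/-- The odd unitary Steinberg group is generated by the subgroups
`ᵚᵗᵘU₁(2n,R,𝔏)` and `ᵚᵗᵘU₁⁻(2n,R,𝔏)`, i.e. by the generators
`X_{n,i}(a), X_n(ζ), X_{−n,i}(a), X_{−n}(ζ)` with `i ∈ Ω ∖ {±n}`. -/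
theorem stU_generated_by_U1_U1neg (f : AntiHermitianForm R pi V)
    (L : OddFormParameter f) (n : ℕ) (hn : 3 ≤ n)
    {G : Type u} [Group G] (S : StURels (n : ℕ∞) f L G) (hS : IsStU S) :
    Subgroup.closure
      ({g : G | ∃ i : ℤ, (i ∈ Omega (n : ℕ∞) ∧ i ≠ (n : ℤ) ∧ i ≠ -(n : ℤ)) ∧
          ∃ a : R, g = S.X (n : ℤ) i a} ∪
       {g : G | ∃ ξ ∈ L.carrier, g = S.Y (n : ℤ) ξ} ∪
       {g : G | ∃ i : ℤ, (i ∈ Omega (n : ℕ∞) ∧ i ≠ (n : ℤ) ∧ i ≠ -(n : ℤ)) ∧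
          ∃ a : R, g = S.X (-(n : ℤ)) i a} ∪
       {g : G | ∃ ξ ∈ L.carrier, g = S.Y (-(n : ℤ)) ξ}) = ⊤ := by
  apply stU_aux f L n hn S hS
  · intro i hi h1 h2 a
    exact Subgroup.subset_closure (Or.inl (Or.inl (Or.inl ⟨i, ⟨hi, h1, h2⟩, a, rfl⟩)))
  · intro i hi h1 h2 a
    exact Subgroup.subset_closure (Or.inl (Or.inr ⟨i, ⟨hi, h1, h2⟩, a, rfl⟩))
  · intro ξ hξ
    exact Subgroup.subset_closure (Or.inl (Or.inl (Or.inr ⟨ξ, hξ, rfl⟩)))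
  · intro ξ hξ
    exact Subgroup.subset_closure (Or.inr ⟨ξ, hξ, rfl⟩)
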